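/- Let (A,·) be the semigroup K-algebra of the rectangular band I×J. A bilinear product * on A is a totally compatible structure on (A,·) (i.e. * is associative and totally compatible with ·) if and only if there exists λ ∈ K such that e_{ij} * e_{kl} = λe_{il} for all (i,j),(k,l) ∈ I×J. -/

import Mathlib

/-- For the semigroup algebra `(A, ·)` of the rectangular band `I × J` over a field `K`,
a bilinear product `*` on `A` is a totally compatible structure on `(A, ·)` (i.e.
associative and totally compatible with `·`) if and only if there exists `λ ∈ K` such
that `e_{ij} * e_{kl} = λ • e_{il}` for all `(i,j), (k,l) ∈ I × J`. -/
theorem totally_compatible_structures_on_rectangular_band {K A I J : Type*} [Field K]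
    [NonUnitalRing A] [Module K A] [SMulCommClass K A A] [IsScalarTower K A A]
    [Nonempty I] [Nonempty J]
    (e : Module.Basis (I × J) K A)
    (hmul : ∀ (i k : I) (j l : J), e (i, j) * e (k, l) = e (i, l))
    (star : A →ₗ[K] A →ₗ[K] A) :
    ((∀ a b c : A, star (star a b) c = star a (star b c)) ∧
      (∀ a b c : A, star a b * c = star (a * b) c ∧ star (a * b) c = star a (b * c) ∧
        star a (b * c) = a * star b c)) ↔
    ∃ lam : K, ∀ (i k : I) (j l : J),
      star (e (i, j)) (e (k, l)) = lam • e (i, l) := by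
  have sc : ∀ (s t : K) (p : I × J), s • e p = t • e p → s = t := by
    intro s t p h
    have := congrArg (fun z => e.repr z p) h
    simpa using this
  constructor
  · rintro ⟨_, hcomp⟩
    obtain ⟨i0⟩ := (inferInstance : Nonempty I)
    obtain ⟨j0⟩ := (inferInstance : Nonempty J)
    have h1 : ∀ a b c : A, star a b * c = star (a * b) c := fun a b c => (hcomp a b c).1
    have h2 : ∀ a b c : A, star (a * b) c = star a (b * c) := fun a b c => (hcomp a b c).2.1
    have h3 : ∀ a b c : A, star a (b * c) = a * star b c := fun a b c => (hcomp a b c).2.2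
    set F : I → J → A := fun i l => star (e (i, j0)) (e (i0, l)) with hFdef
    have claimA : ∀ i j k l, star (e (i, j)) (e (k, l)) = F i l := by
      intro i j k l
      have := h2 (e (i, j)) (e (k, j0)) (e (i0, l))
      rw [hmul, hmul] at this
      exact this.symm
    have claimB : ∀ i l m n, F i l * e (m, n) = F i n := by
      intro i l m n
      have h := h1 (e (i, j0)) (e (i0, l)) (e (m, n))
      rw [hmul] at h
      rw [show F i l * e (m, n) = star (e (i, j0)) (e (i0, l)) * e (m, n) from rfl, h,
        claimA i l m n]
    have claimC : ∀ i q k n, e (i, q) * F k n = F i n := by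
      intro i q k n
      have h := h3 (e (i, q)) (e (k, j0)) (e (i0, n))
      rw [hmul] at h
      rw [← h, claimA i q k n]
    -- sandwich lemma
    have sand : ∀ (p : I × J) (y : A), ∃ s : K, e p * y * e p = s • e p := by
      intro p y
      have hy : y ∈ Submodule.span K (Set.range e) := by
        rw [e.span_eq]; trivial
      induction hy using Submodule.span_induction with
      | mem x hx =>
          obtain ⟨q, rfl⟩ := hx
          refine ⟨1, ?_⟩
          rw [show e p = e (p.1, p.2) from by rw [Prod.mk.eta],
            show e q = e (q.1, q.2) from by rw [Prod.mk.eta], hmul, hmul, one_smul]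
      | zero => exact ⟨0, by simp⟩
      | add x y _ _ hx hy =>
          obtain ⟨s, hs⟩ := hx; obtain ⟨t, ht⟩ := hy
          exact ⟨s + t, by rw [mul_add, add_mul, hs, ht, add_smul]⟩
      | smul c x _ hx =>
          obtain ⟨s, hs⟩ := hx
          exact ⟨c * s, by rw [mul_smul_comm, smul_mul_assoc, hs, smul_smul]⟩
    have hscalar : ∀ i l, ∃ s : K, F i l = s • e (i, l) := by
      intro i l
      have hx1 : F i l * e (i, l) = F i l := claimB i l i l
      have hx2 : e (i, l) * F i l = F i l := claimC i l i l
      obtain ⟨s, hs⟩ := sand (i, l) (F i l)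
      refine ⟨s, ?_⟩
      rw [← hs, hx2, hx1]
    choose μ hμ using hscalar
    have const1 : ∀ i l n, μ i l = μ i n := by
      intro i l n
      have h := claimB i l i0 n
      rw [hμ i l, hμ i n, smul_mul_assoc, hmul] at h
      exact sc _ _ _ h
    have const2 : ∀ i k n, μ k n = μ i n := by
      intro i k n
      have h := claimC i j0 k n
      rw [hμ k n, hμ i n, mul_smul_comm, hmul] at h
      exact sc _ _ _ h
    refine ⟨μ i0 j0, fun i k j l => ?_⟩
    rw [claimA i j k l, hμ i l, const1 i l j0, const2 i0 i j0]
  · rintro ⟨lam, hl⟩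
    have key : ∀ a b : A, star a b = lam • (a * b) := by
      have : star = lam • (LinearMap.mul K A) := by
        apply e.ext; intro p; apply e.ext; intro q
        obtain ⟨i, j⟩ := p; obtain ⟨k, l⟩ := q
        simp [hl i k j l, hmul]
      intro a b
      rw [this]; rfl
    constructor
    · intro a b c
      simp [key, smul_mul_assoc, mul_smul_comm, mul_assoc]
    · intro a b c
      refine ⟨?_, ?_, ?_⟩ <;>
        simp [key, smul_mul_assoc, mul_smul_comm, mul_assoc]
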